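/- Suppose n ≥ 1, n·p_l < k ≤ n·ε, and p_l^k (1−p_l)^(n−k) < ε^k (1−ε)^(n−k), and let ε < p ≤ 1. Then the infimum, over all feasible priors μ, of the posterior confidence P(μ,p) equals θ·f(p_l) / (θ·f(p_l) + (1−θ)·f(p)). -/

import Mathlib

open MeasureTheory Set

/-- The Bernoulli likelihood of observing `k` failures in `n` trials. -/
noncomputable def likelihood (k n : ℕ) (x : ℝ) : ℝ := x ^ k * (1 - x) ^ (n - k)

/-- A prior (probability measure on `[0,1]`) is feasible if it assigns mass `θ`
to `[0, ε]` and full mass to `[p_l, 1]`. -/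
def Feasible (pl ε θ : ℝ) (μ : Measure ℝ) : Prop :=
  IsProbabilityMeasure μ ∧ μ (Icc 0 ε) = ENNReal.ofReal θ ∧ μ (Icc pl 1) = 1

/-- The posterior confidence `P(μ, p)` in the bound `p` after observing
`k` failures in `n` miles, with prior `μ`. -/
noncomputable def posterior (k n : ℕ) (μ : Measure ℝ) (p : ℝ) : ℝ :=
  (∫ x in Icc (0 : ℝ) p, likelihood k n x ∂μ) /
    (∫ x in Icc (0 : ℝ) 1, likelihood k n x ∂μ)

private lemma lik_hasDerivAt (K M : ℕ) (x : ℝ) :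
    HasDerivAt (fun y : ℝ => y ^ (K+1) * (1 - y) ^ (M+1))
      (x ^ K * (1-x) ^ M * (((K:ℝ)+1) - ((K:ℝ)+M+2)*x)) x := by
  have h1 : HasDerivAt (fun y : ℝ => y ^ (K+1)) (((K:ℝ)+1) * x ^ K) x := by
    simpa using hasDerivAt_pow (K+1) x
  have h2 : HasDerivAt (fun y : ℝ => (1 - y) ^ (M+1))
      ((((M:ℝ)+1) * (1-x)^M) * (-1)) x := by
    have h := ((hasDerivAt_id x).const_sub (1:ℝ)).fun_pow (M+1)
    simpa using h
  have h : HasDerivAt (fun y : ℝ => y ^ (K+1) * (1 - y) ^ (M+1)) _ x := h1.fun_mul h2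
  convert h using 1
  ring

private lemma lik_monoOn (K M : ℕ) {c : ℝ} (hc : ((K:ℝ)+M+2) * c ≤ (K:ℝ)+1) :
    MonotoneOn (fun y : ℝ => y ^ (K+1) * (1 - y) ^ (M+1)) (Icc 0 c) := by
  apply monotoneOn_of_hasDerivWithinAt_nonneg (convex_Icc 0 c)
    (f' := fun x => x ^ K * (1-x) ^ M * (((K:ℝ)+1) - ((K:ℝ)+M+2)*x))
    (Continuous.continuousOn (by continuity))
    (fun x _ => (lik_hasDerivAt K M x).hasDerivWithinAt)
  intro x hx
  rw [interior_Icc] at hx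
  obtain ⟨hx0, hxc⟩ := hx
  have hKM : (0:ℝ) < (K:ℝ)+M+2 := by positivity
  have hx1 : x < 1 := by nlinarith
  have h1 : 0 ≤ ((K:ℝ)+1) - ((K:ℝ)+M+2)*x := by nlinarith
  have h2 : (0:ℝ) ≤ x ^ K * (1-x) ^ M :=
    mul_nonneg (pow_nonneg hx0.le K) (pow_nonneg (by linarith) M)
  exact mul_nonneg h2 h1

private lemma lik_antiOn (K M : ℕ) {c : ℝ} (hc : (K:ℝ)+1 ≤ ((K:ℝ)+M+2) * c) :
    AntitoneOn (fun y : ℝ => y ^ (K+1) * (1 - y) ^ (M+1)) (Icc c 1) := by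
  apply antitoneOn_of_hasDerivWithinAt_nonpos (convex_Icc c 1)
    (f' := fun x => x ^ K * (1-x) ^ M * (((K:ℝ)+1) - ((K:ℝ)+M+2)*x))
    (Continuous.continuousOn (by continuity))
    (fun x _ => (lik_hasDerivAt K M x).hasDerivWithinAt)
  intro x hx
  rw [interior_Icc] at hx
  obtain ⟨hxc, hx1⟩ := hx
  have hKM : (0:ℝ) < (K:ℝ)+M+2 := by positivity
  have hx0 : 0 < x := by nlinarith
  have h1 : ((K:ℝ)+1) - ((K:ℝ)+M+2)*x ≤ 0 := by nlinarith
  have h2 : (0:ℝ) ≤ x ^ K * (1-x) ^ M :=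
    mul_nonneg (pow_nonneg hx0.le K) (pow_nonneg (by linarith) M)
  exact mul_nonpos_of_nonneg_of_nonpos h2 h1

private lemma integrable_dirac'' {f : ℝ → ℝ} (a : ℝ) :
    Integrable f (Measure.dirac a) :=
  (integrable_const (f a)).congr (ae_eq_dirac f).symm

open Classical in
private lemma two_atom_integral (f : ℝ → ℝ) (θ' u v : ℝ)
    (hθ : 0 ≤ θ') (hθ' : θ' ≤ 1) {s : Set ℝ} (hs : MeasurableSet s) :
    ∫ x in s, f x ∂(ENNReal.ofReal θ' • Measure.dirac u
        + ENNReal.ofReal (1-θ') • Measure.dirac v)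
      = (if u ∈ s then θ' * f u else 0) + (if v ∈ s then (1-θ') * f v else 0) := by
  rw [Measure.restrict_add, Measure.restrict_smul, Measure.restrict_smul,
      MeasureTheory.restrict_dirac' hs, MeasureTheory.restrict_dirac' hs,
      integral_add_measure]
  · rw [integral_smul_measure, integral_smul_measure]
    split_ifs <;>
      simp [ENNReal.toReal_ofReal hθ, ENNReal.toReal_ofReal (by linarith : (0:ℝ) ≤ 1 - θ')]
  · split_ifs
    · exact (integrable_dirac'' u).smul_measure ENNReal.ofReal_ne_top
    · simp
  · split_ifs
    · exact (integrable_dirac'' v).smul_measure ENNReal.ofReal_ne_top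
    · simp

private lemma two_atom_feasible (pl ε θ q : ℝ) (hpl : 0 ≤ pl) (hplε : pl ≤ ε)
    (hθ0 : 0 ≤ θ) (hθ1 : θ ≤ 1) (hq : ε < q) (hq1 : q ≤ 1) :
    Feasible pl ε θ (ENNReal.ofReal θ • Measure.dirac pl
      + ENNReal.ofReal (1-θ) • Measure.dirac q) := by
  have hsum : ENNReal.ofReal θ + ENNReal.ofReal (1-θ) = 1 := by
    rw [← ENNReal.ofReal_add hθ0 (by linarith), show θ + (1-θ) = 1 by ring,
      ENNReal.ofReal_one]
  have hpl1 : pl ≤ 1 := le_trans hplε (le_trans hq.le hq1)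
  refine ⟨⟨?_⟩, ?_, ?_⟩
  · simp [hsum]
  · have h1 : pl ∈ Icc (0:ℝ) ε := ⟨hpl, hplε⟩
    have h2 : q ∉ Icc (0:ℝ) ε := fun h => absurd h.2 (not_le.2 hq)
    simp [Measure.dirac_apply' _ measurableSet_Icc, indicator, h1, h2]
  · have h1 : pl ∈ Icc pl 1 := ⟨le_refl _, hpl1⟩
    have h2 : q ∈ Icc pl 1 := ⟨le_trans hplε hq.le, hq1⟩
    simp [Measure.dirac_apply' _ measurableSet_Icc, indicator, h1, h2, hsum]

set_option maxHeartbeats 1000000 in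
theorem stmt_4 (k n : ℕ) (hkn : k ≤ n) (hn : 1 ≤ n) (pl ε θ p : ℝ)
    (hpl : 0 < pl) (hple : pl < ε) (hε1 : ε < 1)
    (hθ0 : 0 < θ) (hθ1 : θ ≤ 1)
    (hk1 : (n : ℝ) * pl < k) (hk2 : (k : ℝ) ≤ n * ε)
    (hlik : pl ^ k * (1 - pl) ^ (n - k) < ε ^ k * (1 - ε) ^ (n - k))
    (hεp : ε < p) (hp1 : p ≤ 1) :
    sInf {y : ℝ | ∃ μ : Measure ℝ, Feasible pl ε θ μ ∧ posterior k n μ p = y} =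
      θ * likelihood k n pl /
        (θ * likelihood k n pl + (1 - θ) * likelihood k n p) := by
  classical
  have hnR : (1:ℝ) ≤ n := by exact_mod_cast hn
  have hk0 : 1 ≤ k := by
    rcases Nat.eq_zero_or_pos k with h | h
    · exfalso; rw [h] at hk1; push_cast at hk1; nlinarith
    · exact h
  have hkltn : k < n := by
    by_contra h
    push_neg at h
    have : (n:ℝ) ≤ k := by exact_mod_cast h
    nlinarith
  obtain ⟨K, hK⟩ : ∃ K, k = K + 1 := ⟨k - 1, by omega⟩
  obtain ⟨M, hM⟩ : ∃ M, n - k = M + 1 := ⟨n - k - 1, by omega⟩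
  have hnKM : ((K:ℝ) + M + 2) = (n:ℝ) := by
    have h : K + 1 + (M + 1) = n := by omega
    have := congrArg (fun m : ℕ => (m:ℝ)) h
    push_cast at this
    linarith
  have hkR : ((k:ℕ):ℝ) = (K:ℝ) + 1 := by rw [hK]; push_cast; ring
  have hlikKM : ∀ x : ℝ, likelihood k n x = x ^ (K+1) * (1-x) ^ (M+1) := by
    intro x; rw [likelihood, hM, hK]
  have hmono : ∀ a b : ℝ, 0 ≤ a → a ≤ b → (n:ℝ) * b ≤ k →
      likelihood k n a ≤ likelihood k n b := by
    intro a b ha hab hb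
    rw [hlikKM, hlikKM]
    exact lik_monoOn K M (c := b) (by rw [hnKM, ← hkR]; exact hb)
      ⟨ha, hab⟩ ⟨ha.trans hab, le_refl b⟩ hab
  have hanti : ∀ a b : ℝ, (k:ℝ) ≤ n * a → a ≤ b → b ≤ 1 →
      likelihood k n b ≤ likelihood k n a := by
    intro a b ha hab hb
    rw [hlikKM, hlikKM]
    exact lik_antiOn K M (c := a) (by rw [hnKM, ← hkR]; exact ha)
      ⟨le_refl a, hab.trans hb⟩ ⟨hab, hb⟩ hab
  have hcont : Continuous (likelihood k n) := by
    unfold likelihood; continuity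
  -- min of likelihood on [pl, ε] is at pl
  have hfmin : ∀ x ∈ Icc pl ε, likelihood k n pl ≤ likelihood k n x := by
    intro x hx
    rcases le_or_gt ((n:ℝ) * x) k with h | h
    · exact hmono pl x hpl.le hx.1 h
    · have h1 : likelihood k n pl < likelihood k n ε := by
        simpa [likelihood] using hlik
      have h2 : likelihood k n ε ≤ likelihood k n x := hanti x ε h.le hx.2 hε1.le
      linarith
  have hknp : (k:ℝ) ≤ n * p := by nlinarith
  have hfp : ∀ x ∈ Ioc p 1, likelihood k n x ≤ likelihood k n p := by
    intro x hx
    exact hanti p x hknp hx.1.le hx.2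
  have hp0 : 0 < p := lt_trans (lt_trans hpl hple) hεp
  have hLa : 0 < likelihood k n pl := by
    rw [hlikKM]
    exact mul_pos (pow_pos hpl _) (pow_pos (by linarith) _)
  have hLp : 0 ≤ likelihood k n p := by
    rw [hlikKM]
    exact mul_nonneg (pow_nonneg hp0.le _) (pow_nonneg (by linarith) _)
  have hden : 0 < θ * likelihood k n pl + (1 - θ) * likelihood k n p :=
    add_pos_of_pos_of_nonneg (mul_pos hθ0 hLa) (mul_nonneg (by linarith) hLp)
  set S := {y : ℝ | ∃ μ : Measure ℝ, Feasible pl ε θ μ ∧ posterior k n μ p = y}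
    with hS
  set V := θ * likelihood k n pl /
      (θ * likelihood k n pl + (1 - θ) * likelihood k n p) with hV
  -- lower bound for the posterior of any feasible prior
  have hlow : ∀ μ : Measure ℝ, Feasible pl ε θ μ → V ≤ posterior k n μ p := by
    rintro μ ⟨hprob, hμε, hμ1⟩
    have hint1 : IntegrableOn (likelihood k n) (Icc 0 1) μ := hcont.integrableOn_Icc
    have hintp : IntegrableOn (likelihood k n) (Icc 0 p) μ := hcont.integrableOn_Icc
    have hintpl : IntegrableOn (likelihood k n) (Icc pl ε) μ := hcont.integrableOn_Icc
    have hintIoc : IntegrableOn (likelihood k n) (Ioc p 1) μ :=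
      hint1.mono_set (fun x hx => ⟨le_trans hp0.le hx.1.le, hx.2⟩)
    have hcompl : μ (Icc pl 1)ᶜ = 0 := by
      rw [measure_compl measurableSet_Icc (measure_ne_top μ _), hμ1, measure_univ,
        tsub_self]
    have hplε_meas : μ (Icc pl ε) = ENNReal.ofReal θ := by
      have hseteq : Icc pl ε = Icc 0 ε ∩ Icc pl 1 := by
        ext x
        simp only [mem_Icc, mem_inter_iff]
        constructor
        · rintro ⟨h1, h2⟩; exact ⟨⟨by linarith, h2⟩, ⟨h1, by linarith⟩⟩
        · rintro ⟨⟨_, h2⟩, ⟨h1, _⟩⟩; exact ⟨h1, h2⟩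
      rw [hseteq, measure_inter_conull hcompl, hμε]
    have hIoc_meas : (μ (Ioc p 1)).toReal ≤ 1 - θ := by
      have hsub : Ioc p 1 ⊆ (Icc 0 ε)ᶜ := by
        intro x hx
        simp only [mem_compl_iff, mem_Icc, not_and, not_le]
        intro _
        linarith [hx.1]
      have hle : μ (Ioc p 1) ≤ μ (Icc 0 ε)ᶜ := measure_mono hsub
      rw [measure_compl measurableSet_Icc (measure_ne_top μ _), measure_univ, hμε] at hle
      have h1 : ENNReal.ofReal θ ≤ 1 := ENNReal.ofReal_le_one.2 hθ1
      have h2 : (1 - ENNReal.ofReal θ).toReal = 1 - θ := by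
        rw [ENNReal.toReal_sub_of_le h1 ENNReal.one_ne_top, ENNReal.toReal_one,
          ENNReal.toReal_ofReal hθ0.le]
      calc (μ (Ioc p 1)).toReal ≤ (1 - ENNReal.ofReal θ).toReal :=
            ENNReal.toReal_mono (by simp [ENNReal.sub_ne_top]) hle
        _ = 1 - θ := h2
    set A := ∫ x in Icc (0:ℝ) p, likelihood k n x ∂μ with hA_def
    set B := ∫ x in Ioc p 1, likelihood k n x ∂μ with hB_def
    have hnonneg : ∀ x ∈ Icc (0:ℝ) 1, 0 ≤ likelihood k n x := by
      intro x hx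
      rw [hlikKM]
      exact mul_nonneg (pow_nonneg hx.1 _) (pow_nonneg (by linarith [hx.2]) _)
    have hIAB : ∫ x in Icc (0:ℝ) 1, likelihood k n x ∂μ = A + B := by
      rw [← Icc_union_Ioc_eq_Icc hp0.le hp1]
      exact setIntegral_union
        (Set.disjoint_left.2 fun x hx hx' => absurd hx.2 (not_le.2 hx'.1))
        measurableSet_Ioc hintp hintIoc
    have hA1 : θ * likelihood k n pl ≤ ∫ x in Icc pl ε, likelihood k n x ∂μ := by
      have h := setIntegral_ge_of_const_le_real measurableSet_Icc (measure_ne_top μ _)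
        hfmin hintpl
      rw [measureReal_def, hplε_meas, ENNReal.toReal_ofReal hθ0.le] at h
      linarith [h, mul_comm θ (likelihood k n pl)]
    have hA2 : ∫ x in Icc pl ε, likelihood k n x ∂μ ≤ A := by
      apply setIntegral_mono_set hintp
      · exact (ae_restrict_iff' measurableSet_Icc).2 (ae_of_all _ fun x hx =>
          hnonneg x ⟨hx.1, hx.2.trans hp1⟩)
      · exact HasSubset.Subset.eventuallyLE (fun x hx =>
          ⟨le_trans hpl.le hx.1, le_trans hx.2 (le_of_lt hεp)⟩)
    have hA : θ * likelihood k n pl ≤ A := le_trans hA1 hA2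
    have hApos : 0 < A := lt_of_lt_of_le (mul_pos hθ0 hLa) hA
    have hB0 : 0 ≤ B := setIntegral_nonneg measurableSet_Ioc fun x hx =>
      hnonneg x ⟨le_trans hp0.le hx.1.le, hx.2⟩
    have hBle : B ≤ (1 - θ) * likelihood k n p := by
      calc B ≤ ∫ _ in Ioc p 1, likelihood k n p ∂μ :=
            setIntegral_mono_on hintIoc (integrable_const _) measurableSet_Ioc hfp
        _ = (μ (Ioc p 1)).toReal * likelihood k n p := by
            rw [setIntegral_const]; rfl
        _ ≤ (1 - θ) * likelihood k n p := mul_le_mul_of_nonneg_right hIoc_meas hLp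
    rw [posterior, hIAB, hV]
    rw [div_le_div_iff₀ hden (by linarith)]
    have hkey : θ * likelihood k n pl * B ≤ A * ((1 - θ) * likelihood k n p) :=
      mul_le_mul hA hBle hB0 hApos.le
    calc θ * likelihood k n pl * (A + B)
        = A * (θ * likelihood k n pl) + θ * likelihood k n pl * B := by ring
      _ ≤ A * (θ * likelihood k n pl) + A * ((1 - θ) * likelihood k n p) := by
          linarith [hkey]
      _ = A * (θ * likelihood k n pl + (1 - θ) * likelihood k n p) := by ring
  -- membership of two-atom posteriors
  have hmem : ∀ q : ℝ, p < q → q ≤ 1 →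
      θ * likelihood k n pl /
        (θ * likelihood k n pl + (1 - θ) * likelihood k n q) ∈ S := by
    intro q hq hq1
    refine ⟨ENNReal.ofReal θ • Measure.dirac pl + ENNReal.ofReal (1-θ) • Measure.dirac q,
      two_atom_feasible pl ε θ q hpl.le hple.le hθ0.le hθ1 (lt_trans hεp hq) hq1, ?_⟩
    rw [posterior,
      two_atom_integral _ θ pl q hθ0.le hθ1 measurableSet_Icc,
      two_atom_integral _ θ pl q hθ0.le hθ1 measurableSet_Icc]
    have h1 : pl ∈ Icc (0:ℝ) p := ⟨hpl.le, by linarith⟩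
    have h2 : q ∉ Icc (0:ℝ) p := fun h => absurd h.2 (not_le.2 hq)
    have h3 : pl ∈ Icc (0:ℝ) 1 := ⟨hpl.le, by linarith⟩
    have h4 : q ∈ Icc (0:ℝ) 1 := ⟨by linarith, hq1⟩
    simp [h1, h2, h3, h4]
  have hbdd : BddBelow S := by
    refine ⟨V, fun y hy => ?_⟩
    obtain ⟨μ, hfe, hpost⟩ := hy
    rw [← hpost]
    exact hlow μ hfe
  have hne : S.Nonempty := by
    refine ⟨posterior k n (ENNReal.ofReal θ • Measure.dirac pl
      + ENNReal.ofReal (1-θ) • Measure.dirac 1) p,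
      ENNReal.ofReal θ • Measure.dirac pl + ENNReal.ofReal (1-θ) • Measure.dirac 1,
      two_atom_feasible pl ε θ 1 hpl.le hple.le hθ0.le hθ1 hε1 le_rfl, rfl⟩
  apply le_antisymm
  · -- sInf S ≤ V
    rcases eq_or_lt_of_le hp1 with hp1' | hp1'
    · -- p = 1
      subst hp1'
      have hL1 : likelihood k n 1 = 0 := by
        rw [hlikKM]; simp
      apply csInf_le hbdd
      refine ⟨ENNReal.ofReal θ • Measure.dirac pl + ENNReal.ofReal (1-θ) • Measure.dirac 1,
        two_atom_feasible pl ε θ 1 hpl.le hple.le hθ0.le hθ1 hε1 le_rfl, ?_⟩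
      rw [posterior,
        two_atom_integral _ θ pl 1 hθ0.le hθ1 measurableSet_Icc]
      have h1 : pl ∈ Icc (0:ℝ) 1 := ⟨hpl.le, by linarith⟩
      have h2 : (1:ℝ) ∈ Icc (0:ℝ) 1 := ⟨by norm_num, le_rfl⟩
      rw [if_pos h1, if_pos h2, hL1, hV, hL1, mul_zero, add_zero]
    · -- p < 1
      have hg : Filter.Tendsto (fun q : ℝ => θ * likelihood k n pl /
          (θ * likelihood k n pl + (1 - θ) * likelihood k n q)) (nhdsWithin p (Ioi p))
          (nhds V) := by
        have hct : ContinuousAt (fun q : ℝ => θ * likelihood k n pl /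
            (θ * likelihood k n pl + (1 - θ) * likelihood k n q)) p := by
          apply ContinuousAt.div continuousAt_const
          · exact (continuous_const.add (continuous_const.mul hcont)).continuousAt
          · exact ne_of_gt hden
        exact hct.tendsto.mono_left nhdsWithin_le_nhds
      refine ge_of_tendsto hg ?_
      filter_upwards [Ioo_mem_nhdsGT_of_mem ⟨le_refl p, hp1'⟩] with q hq
      exact csInf_le hbdd (hmem q hq.1 hq.2.le)
  · exact le_csInf hne fun y hy => by
      obtain ⟨μ, hfe, hpost⟩ := hy
      rw [← hpost]
      exact hlow μ hfe
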